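/- Let G be a graph that is not a star and H a graph with minimum degree at least 2. Then for every natural number n, the spectrum S(n;G,H) is an interval of integers: if k1, k2 ∈ S(n;G,H) and k1 ≤ k ≤ k2, then k ∈ S(n;G,H). -/

import Mathlib

open SimpleGraph Finset

universe u v

variable {α : Type u} {β : Type v}

/-- The set of colors used on (non-loop) edges of `K_n` by an edge-coloring `c`. -/
def edgeColors {n : ℕ} (c : Sym2 (Fin n) → ℕ) : Finset ℕ :=
  (Finset.univ.filter fun e : Sym2 (Fin n) => ¬ e.IsDiag).image c

/-- `c` contains a monochromatic copy of `G`. -/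
def HasMonoCopy {n : ℕ} (c : Sym2 (Fin n) → ℕ) (G : SimpleGraph α) : Prop :=
  ∃ f : α ↪ Fin n, ∃ k : ℕ, ∀ u v : α, G.Adj u v → c s(f u, f v) = k

/-- `c` contains a rainbow (totally multicolored) copy of `H`. -/
def HasRainbowCopy {n : ℕ} (c : Sym2 (Fin n) → ℕ) (H : SimpleGraph β) : Prop :=
  ∃ f : β ↪ Fin n, ∀ u v u' v' : β, H.Adj u v → H.Adj u' v' →
    c s(f u, f v) = c s(f u', f v') → s(u, v) = s(u', v')

/-- A `(G,H)`-good coloring: no monochromatic `G` and no rainbow `H`. -/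
def GoodColoring {n : ℕ} (c : Sym2 (Fin n) → ℕ) (G : SimpleGraph α) (H : SimpleGraph β) : Prop :=
  ¬ HasMonoCopy c G ∧ ¬ HasRainbowCopy c H

/-- The mixed-Ramsey mixedSpectrum `S(n; G, H)`. -/
def mixedSpectrum (n : ℕ) (G : SimpleGraph α) (H : SimpleGraph β) : Set ℕ :=
  {k | ∃ c : Sym2 (Fin n) → ℕ, GoodColoring c G H ∧ (edgeColors c).card = k}

/-- `G` is a star: all edges share a common vertex. -/
def IsStar (G : SimpleGraph α) : Prop :=
  ∃ v : α, ∀ u w : α, G.Adj u w → u = v ∨ w = v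

/-- `K_3 + e`: a triangle `0,1,2` with a pendant edge `0-3`. -/
def K3e : SimpleGraph (Fin 4) := fromEdgeSet {s(0,1), s(0,2), s(1,2), s(0,3)}

/-- The 4-cycle `C_4`. -/
def C4g : SimpleGraph (Fin 4) := fromEdgeSet {s(0,1), s(1,2), s(2,3), s(3,0)}

/-- The matching `ℓK_2`. -/
def matchingGraph (ℓ : ℕ) : SimpleGraph (Fin ℓ × Fin 2) := fromRel (fun a b => a.1 = b.1)

/-- The star `K_{1,ℓ}`. -/
def starGraph (ℓ : ℕ) : SimpleGraph (Fin (ℓ+1)) := fromRel (fun a _ => a = 0)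

/-- The cycle `C_m` on `ZMod m`. -/
def cycGraph (m : ℕ) : SimpleGraph (ZMod m) := fromRel (fun a b => a = b + 1)

-- AUX

lemma mem_edgeColors {n : ℕ} {c : Sym2 (Fin n) → ℕ} {x : ℕ} :
    x ∈ edgeColors c ↔ ∃ e : Sym2 (Fin n), ¬ e.IsDiag ∧ c e = x := by
  simp [edgeColors]

def vmin {n : ℕ} (e : Sym2 (Fin n)) : ℕ :=
  Sym2.lift ⟨fun a b => Min.min a.val b.val, fun a b => min_comm _ _⟩ e

lemma vmin_mk {n : ℕ} (a b : Fin n) : vmin s(a, b) = Min.min a.val b.val := rfl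

lemma vmin_lt {n : ℕ} (e : Sym2 (Fin n)) (hd : ¬ e.IsDiag) : vmin e + 1 < n := by
  induction e using Sym2.ind with
  | _ a b =>
    rw [Sym2.mk_isDiag_iff] at hd
    have : a.val ≠ b.val := fun h => hd (Fin.val_injective h)
    have h1 := a.isLt
    have h2 := b.isLt
    rw [vmin_mk]
    omega

def pc {n : ℕ} (c2 : Sym2 (Fin n) → ℕ) (s : ℕ) (B : Finset ℕ) (e : Sym2 (Fin n)) : ℕ :=
  if vmin e < s ∨ (vmin e = s ∧ c2 e ∈ B) then 2 * vmin e else 2 * c2 e + 1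

lemma card_shift {n : ℕ} (c : Sym2 (Fin n) → ℕ) :
    (edgeColors (fun e => 2 * c e + 1)).card = (edgeColors c).card := by
  unfold edgeColors
  rw [show (fun e : Sym2 (Fin n) => 2 * c e + 1) = (fun m => 2 * m + 1) ∘ c from rfl,
    ← Finset.image_image]
  exact Finset.card_image_of_injective _ (fun a b h => by omega)

lemma pc_zero {n : ℕ} (c2 : Sym2 (Fin n) → ℕ) : pc c2 0 ∅ = fun e => 2 * c2 e + 1 := by
  funext e
  unfold pc
  rw [if_neg]
  rintro (h | ⟨-, h⟩)
  · omega
  · exact absurd h (Finset.notMem_empty _)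

lemma card_pc_top {n : ℕ} (c2 : Sym2 (Fin n) → ℕ) (s : ℕ) (B : Finset ℕ) (hs : n ≤ s) :
    (edgeColors (pc c2 s B)).card = n - 1 := by
  have himg : edgeColors (pc c2 s B) = (Finset.range (n - 1)).image (fun i => 2 * i) := by
    ext x
    rw [mem_edgeColors, Finset.mem_image]
    constructor
    · rintro ⟨e, hd, hx⟩
      have h := vmin_lt e hd
      refine ⟨vmin e, Finset.mem_range.mpr (by omega), ?_⟩
      rw [← hx]
      unfold pc
      rw [if_pos (Or.inl (by omega))]
    · rintro ⟨i, hi, hx⟩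
      rw [Finset.mem_range] at hi
      have hn : n - 1 < n := by omega
      have hin : i < n := by omega
      refine ⟨s(⟨i, hin⟩, ⟨n - 1, hn⟩), ?_, ?_⟩
      · rw [Sym2.mk_isDiag_iff]
        intro h
        have := congrArg Fin.val h
        simp at this
        omega
      · unfold pc
        rw [vmin_mk]
        have : Min.min i (n-1) = i := by omega
        rw [this, if_pos (Or.inl (by omega))]
        omega
  rw [himg, Finset.card_image_of_injective _ (fun a b h => by omega), Finset.card_range]

lemma card_le_of_forall {n : ℕ} (c c' : Sym2 (Fin n) → ℕ) (b : ℕ)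
    (h : ∀ e : Sym2 (Fin n), ¬ e.IsDiag → c' e = c e ∨ c' e = b) :
    (edgeColors c').card ≤ (edgeColors c).card + 1 := by
  have hsub : edgeColors c' ⊆ insert b (edgeColors c) := by
    intro x hx
    obtain ⟨e, hd, he⟩ := mem_edgeColors.mp hx
    rcases h e hd with h' | h'
    · exact Finset.mem_insert_of_mem (mem_edgeColors.mpr ⟨e, hd, h' ▸ he⟩)
    · rw [← he, h']; exact Finset.mem_insert_self _ _
  calc (edgeColors c').card ≤ (insert b (edgeColors c)).card := Finset.card_le_card hsub
    _ ≤ (edgeColors c).card + 1 := Finset.card_insert_le _ _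

lemma card_le_of_exists {n : ℕ} (c c' : Sym2 (Fin n) → ℕ)
    (h : ∀ e : Sym2 (Fin n), ¬ e.IsDiag → ∃ e' : Sym2 (Fin n), ¬ e'.IsDiag ∧ c' e' = c e) :
    (edgeColors c).card ≤ (edgeColors c').card := by
  apply Finset.card_le_card
  intro x hx
  obtain ⟨e, hd, he⟩ := mem_edgeColors.mp hx
  obtain ⟨e', hd', he'⟩ := h e hd
  exact mem_edgeColors.mpr ⟨e', hd', he'.trans he⟩

def Uset {n : ℕ} (c2 : Sym2 (Fin n) → ℕ) (s : ℕ) : Finset ℕ :=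
  (edgeColors c2).filter fun β => ∀ e : Sym2 (Fin n), ¬ e.IsDiag → s < vmin e → c2 e ≠ β

lemma pc_good {n : ℕ} (G : SimpleGraph α) (H : SimpleGraph β) [Fintype β] [DecidableRel H.Adj]
    (hG : ¬ IsStar G) (hH : ∀ v : β, 2 ≤ H.degree v)
    (c2 : Sym2 (Fin n) → ℕ) (hc2 : GoodColoring c2 G H)
    (s : ℕ) (B : Finset ℕ)
    (hP : ∀ e : Sym2 (Fin n), ¬ e.IsDiag → s < vmin e → c2 e ∉ B) :
    GoodColoring (pc c2 s B) G H := by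
  constructor
  · -- no mono copy
    rintro ⟨f, κ, hmono⟩
    by_cases hedge : ∃ u v : α, G.Adj u v
    · obtain ⟨u1, v1, h11⟩ := hedge
      have hk1 := hmono u1 v1 h11
      by_cases hst : vmin s(f u1, f v1) < s ∨ (vmin s(f u1, f v1) = s ∧ c2 s(f u1, f v1) ∈ B)
      · -- starred edge: κ = 2 * i
        set i := vmin s(f u1, f v1) with hi
        unfold pc at hk1
        rw [if_pos hst] at hk1
        -- hk1 : 2 * i = κ
        have key : ∀ u v : α, G.Adj u v → (f u).val = i ∨ (f v).val = i := by
          intro u v huv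
          have h := hmono u v huv
          unfold pc at h
          split at h
          · have hm : Min.min (f u).val (f v).val = i := by
              have := vmin_mk (f u) (f v); omega
            omega
          · omega
        have hval : ∀ x : α, (f x).val = i → ∀ y : α, (f y).val = i → x = y := by
          intro x hx y hy
          exact f.injective (Fin.val_injective (hx.trans hy.symm))
        apply hG
        rcases key u1 v1 h11 with h | h
        · exact ⟨u1, fun u w huw => (key u w huw).imp (fun h' => hval u h' u1 h)
            (fun h' => hval w h' u1 h)⟩
        · exact ⟨v1, fun u w huw => (key u w huw).imp (fun h' => hval u h' v1 h)
            (fun h' => hval w h' v1 h)⟩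
      · -- unstarred: κ odd, all copy edges share c2 color
        unfold pc at hk1
        rw [if_neg hst] at hk1
        apply hc2.1
        refine ⟨f, c2 s(f u1, f v1), fun u v huv => ?_⟩
        have h := hmono u v huv
        unfold pc at h
        split at h
        · omega
        · omega
    · exact hc2.1 ⟨f, 0, fun u v huv => absurd ⟨u, v, huv⟩ hedge⟩
  · -- no rainbow copy
    rintro ⟨f, hrb⟩
    have hnr := hc2.2
    unfold HasRainbowCopy at hnr
    push_neg at hnr
    obtain ⟨u, v, u', v', huv, huv', heq, hne⟩ := hnr f
    have hnd : ∀ (a b : β), H.Adj a b → ¬ (s(f a, f b) : Sym2 (Fin n)).IsDiag := by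
      intro a b hab
      rw [Sym2.mk_isDiag_iff]
      exact fun h => (H.ne_of_adj hab) (f.injective h)
    have hne2 : (Finset.univ.image fun b : β => (f b).val).Nonempty :=
      ⟨(f u).val, Finset.mem_image_of_mem _ (Finset.mem_univ u)⟩
    set i := Finset.min' _ hne2 with hidef
    obtain ⟨u0, -, hu0⟩ := Finset.mem_image.mp (Finset.min'_mem _ hne2)
    have hle : ∀ b : β, i ≤ (f b).val := fun b =>
      Finset.min'_le _ _ (Finset.mem_image_of_mem _ (Finset.mem_univ b))
    by_cases his : i < s
    · -- two edges at min vertex, both starred with color 2*i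
      have hdeg := hH u0
      rw [← SimpleGraph.card_neighborFinset_eq_degree] at hdeg
      obtain ⟨w1, hw1, w2, hw2, hww⟩ := Finset.one_lt_card.mp hdeg
      rw [SimpleGraph.mem_neighborFinset] at hw1 hw2
      have hv : ∀ w : β, vmin (s(f u0, f w) : Sym2 (Fin n)) = i := by
        intro w
        rw [vmin_mk]
        have := hle w
        omega
      have hcol : ∀ w : β, pc c2 s B s(f u0, f w) = 2 * i := by
        intro w
        unfold pc
        rw [if_pos (Or.inl (by rw [hv]; exact his)), hv]
      have := hrb u0 w1 u0 w2 hw1 hw2 ((hcol w1).trans (hcol w2).symm)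
      rw [Sym2.eq_iff] at this
      rcases this with ⟨-, h⟩ | ⟨h, -⟩
      · exact hww h
      · exact (H.ne_of_adj hw2) h
    · -- all copy edges have vmin ≥ s
      have hmin : ∀ a b : β, s ≤ vmin (s(f a, f b) : Sym2 (Fin n)) := by
        intro a b
        rw [vmin_mk]
        have := hle a
        have := hle b
        omega
      set E1 : Sym2 (Fin n) := s(f u, f v) with hE1
      set E2 : Sym2 (Fin n) := s(f u', f v') with hE2
      have hd1 := hnd u v huv
      have hd2 := hnd u' v' huv'
      have hm1 : s ≤ vmin E1 := hmin u v
      have hm2 : s ≤ vmin E2 := hmin u' v'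
      by_cases h1 : vmin E1 < s ∨ (vmin E1 = s ∧ c2 E1 ∈ B) <;>
        by_cases h2 : vmin E2 < s ∨ (vmin E2 = s ∧ c2 E2 ∈ B)
      · -- both starred : both color 2*s
        have hv1 : vmin E1 = s := by
          rcases h1 with h | ⟨h, -⟩ <;> omega
        have hv2 : vmin E2 = s := by
          rcases h2 with h | ⟨h, -⟩ <;> omega
        have : pc c2 s B E1 = pc c2 s B E2 := by
          unfold pc; rw [if_pos h1, if_pos h2, hv1, hv2]
        exact hne (hrb u v u' v' huv huv' this)
      · -- E1 starred, E2 not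
        exfalso
        have hB1 : c2 E1 ∈ B := by
          rcases h1 with h | ⟨-, h⟩
          · exact absurd h (by omega)
          · exact h
        have hB2 : c2 E2 ∈ B := heq ▸ hB1
        have hv2 : vmin E2 = s := by
          by_contra h
          exact hP E2 hd2 (by omega) hB2
        exact h2 (Or.inr ⟨hv2, hB2⟩)
      · -- E2 starred, E1 not
        exfalso
        have hB2 : c2 E2 ∈ B := by
          rcases h2 with h | ⟨-, h⟩
          · exact absurd h (by omega)
          · exact h
        have hB1 : c2 E1 ∈ B := heq ▸ hB2
        have hv1 : vmin E1 = s := by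
          by_contra h
          exact hP E1 hd1 (by omega) hB1
        exact h1 (Or.inr ⟨hv1, hB1⟩)
      · -- both unstarred
        have : pc c2 s B E1 = pc c2 s B E2 := by
          unfold pc; rw [if_neg h1, if_neg h2, heq]
        exact hne (hrb u v u' v' huv huv' this)

lemma base_case {n : ℕ} (G : SimpleGraph α) (H : SimpleGraph β) [Fintype β] [DecidableRel H.Adj]
    (hG : ¬ IsStar G) (hH : ∀ v : β, 2 ≤ H.degree v)
    (c2 : Sym2 (Fin n) → ℕ) (hc2 : GoodColoring c2 G H) (s : ℕ) (B : Finset ℕ)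
    (hP : ∀ e : Sym2 (Fin n), ¬ e.IsDiag → s < vmin e → c2 e ∉ B)
    (hs : n ≤ s) (k : ℕ)
    (hkl : Min.min ((edgeColors (pc c2 s B)).card) (n - 1) ≤ k)
    (hku : k ≤ Max.max ((edgeColors (pc c2 s B)).card) (n - 1)) :
    k ∈ mixedSpectrum n G H := by
  refine ⟨pc c2 s B, pc_good G H hG hH c2 hc2 s B hP, ?_⟩
  rw [card_pc_top c2 s B hs] at hkl hku ⊢
  omega

lemma main_lemma {n : ℕ} (G : SimpleGraph α) (H : SimpleGraph β) [Fintype β] [DecidableRel H.Adj]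
    (hG : ¬ IsStar G) (hH : ∀ v : β, 2 ≤ H.degree v)
    (c2 : Sym2 (Fin n) → ℕ) (hc2 : GoodColoring c2 G H) (μ : ℕ) :
    ∀ (s : ℕ) (B : Finset ℕ),
      (∀ e : Sym2 (Fin n), ¬ e.IsDiag → s < vmin e → c2 e ∉ B) →
      (n + 1 - s) * ((edgeColors c2).card + 1) + ((Uset c2 s) \ B).card ≤ μ →
      ∀ k : ℕ,
        Min.min ((edgeColors (pc c2 s B)).card) (n - 1) ≤ k →
        k ≤ Max.max ((edgeColors (pc c2 s B)).card) (n - 1) →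
        k ∈ mixedSpectrum n G H := by
  induction μ with
  | zero =>
    intro s B hP hμ k hkl hku
    have hs : n ≤ s := by
      have h0 : (n + 1 - s) * ((edgeColors c2).card + 1) = 0 := by omega
      rcases Nat.mul_eq_zero.mp h0 with h | h <;> omega
    exact base_case G H hG hH c2 hc2 s B hP hs k hkl hku
  | succ μ ih =>
    intro s B hP hμ k hkl hku
    by_cases hs : n ≤ s
    · exact base_case G H hG hH c2 hc2 s B hP hs k hkl hku
    by_cases hk0 : k = (edgeColors (pc c2 s B)).card
    · exact ⟨pc c2 s B, pc_good G H hG hH c2 hc2 s B hP, hk0.symm⟩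
    by_cases hU : ((Uset c2 s) \ B).Nonempty
    · -- Type A step: absorb a unique color β into the star at s
      obtain ⟨b0, hb0⟩ := hU
      have hb0' := hb0
      rw [Finset.mem_sdiff] at hb0'
      obtain ⟨hb0U, hb0B⟩ := hb0'
      have hb0u : ∀ e : Sym2 (Fin n), ¬ e.IsDiag → s < vmin e → c2 e ≠ b0 := by
        rw [Uset, Finset.mem_filter] at hb0U
        exact hb0U.2
      set B' := insert b0 B with hB'
      have hP' : ∀ e : Sym2 (Fin n), ¬ e.IsDiag → s < vmin e → c2 e ∉ B' := by
        intro e hd hlt hmem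
        rcases Finset.mem_insert.mp hmem with h | h
        · exact hb0u e hd hlt h
        · exact hP e hd hlt h
      have hμ' : (n + 1 - s) * ((edgeColors c2).card + 1) + ((Uset c2 s) \ B').card ≤ μ := by
        have hUeq : (Uset c2 s) \ B' = ((Uset c2 s) \ B).erase b0 := by
          ext x
          simp only [hB', Finset.mem_sdiff, Finset.mem_erase, Finset.mem_insert]
          tauto
        have hpos : 0 < ((Uset c2 s) \ B).card := Finset.card_pos.mpr ⟨b0, hb0⟩
        rw [hUeq, Finset.card_erase_of_mem hb0]
        generalize (n + 1 - s) * ((edgeColors c2).card + 1) = X at hμ ⊢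
        omega
      -- card bounds
      have rel1 : ∀ e : Sym2 (Fin n), ¬ e.IsDiag →
          pc c2 s B' e = pc c2 s B e ∨ pc c2 s B' e = 2 * s := by
        intro e hd
        unfold pc
        by_cases ho : vmin e < s ∨ (vmin e = s ∧ c2 e ∈ B)
        · left
          rw [if_pos ho, if_pos (ho.imp id (fun ⟨h1, h2⟩ => ⟨h1, Finset.mem_insert_of_mem h2⟩))]
        · by_cases hn : vmin e < s ∨ (vmin e = s ∧ c2 e ∈ B')
          · right
            rw [if_pos hn]
            rcases hn with h | ⟨h, -⟩
            · exact absurd (Or.inl h) ho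
            · rw [h]
          · left
            rw [if_neg hn, if_neg ho]
      have rel2 : ∀ e : Sym2 (Fin n), ¬ e.IsDiag →
          pc c2 s B e = pc c2 s B' e ∨ pc c2 s B e = 2 * b0 + 1 := by
        intro e hd
        unfold pc
        by_cases ho : vmin e < s ∨ (vmin e = s ∧ c2 e ∈ B)
        · left
          rw [if_pos ho, if_pos (ho.imp id (fun ⟨h1, h2⟩ => ⟨h1, Finset.mem_insert_of_mem h2⟩))]
        · by_cases hn : vmin e < s ∨ (vmin e = s ∧ c2 e ∈ B')
          · right
            rw [if_neg ho]
            rcases hn with h | ⟨h, hmem⟩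
            · exact absurd (Or.inl h) ho
            · rcases Finset.mem_insert.mp hmem with h' | h'
              · rw [h']
              · exact absurd (Or.inr ⟨h, h'⟩) ho
          · left
            rw [if_neg hn, if_neg ho]
      have hb1 := card_le_of_forall (pc c2 s B) (pc c2 s B') (2 * s) rel1
      have hb2 := card_le_of_forall (pc c2 s B') (pc c2 s B) (2 * b0 + 1) rel2
      exact ih s B' hP' hμ' k (by omega) (by omega)
    · -- Type B step: star-ify the rest of vertex s, move to s+1
      rw [Finset.not_nonempty_iff_eq_empty] at hU
      have hsn : s < n := by omega
      have hP' : ∀ e : Sym2 (Fin n), ¬ e.IsDiag → s + 1 < vmin e → c2 e ∉ (∅ : Finset ℕ) :=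
        fun e _ _ h => absurd h (Finset.notMem_empty _)
      have hμ' : (n + 1 - (s + 1)) * ((edgeColors c2).card + 1) + ((Uset c2 (s+1)) \ ∅).card ≤ μ := by
        have h1 : ((Uset c2 (s+1)) \ ∅).card ≤ (edgeColors c2).card := by
          rw [Finset.sdiff_empty]
          exact Finset.card_le_card (Finset.filter_subset _ _)
        have h2 : n + 1 - s = (n + 1 - (s + 1)) + 1 := by omega
        rw [h2] at hμ
        rw [Nat.add_mul, Nat.one_mul] at hμ
        generalize (n + 1 - (s + 1)) * ((edgeColors c2).card + 1) = X at hμ ⊢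
        omega
      have rel1 : ∀ e : Sym2 (Fin n), ¬ e.IsDiag →
          pc c2 (s+1) ∅ e = pc c2 s B e ∨ pc c2 (s+1) ∅ e = 2 * s := by
        intro e hd
        unfold pc
        by_cases h1 : vmin e < s
        · left
          rw [if_pos (Or.inl h1), if_pos (Or.inl (by omega))]
        · by_cases h2 : vmin e = s
          · right
            have hlt : vmin e < s + 1 := by omega
            rw [if_pos (Or.inl hlt : vmin e < s + 1 ∨ (vmin e = s + 1 ∧ c2 e ∈ (∅ : Finset ℕ))), h2]
          · left
            have hgt : s < vmin e := by omega
            rw [if_neg, if_neg]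
            · rintro (h | ⟨h, -⟩) <;> omega
            · rintro (h | ⟨h, h'⟩)
              · omega
              · exact absurd h' (Finset.notMem_empty _)
      have rel2 : ∀ e : Sym2 (Fin n), ¬ e.IsDiag →
          ∃ e' : Sym2 (Fin n), ¬ e'.IsDiag ∧ pc c2 (s+1) ∅ e' = pc c2 s B e := by
        intro e hd
        by_cases h1 : vmin e < s
        · refine ⟨e, hd, ?_⟩
          unfold pc
          rw [if_pos (Or.inl h1), if_pos (Or.inl (by omega))]
        · by_cases h2 : vmin e = s
          · by_cases h3 : c2 e ∈ B
            · refine ⟨e, hd, ?_⟩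
              unfold pc
              have hA : vmin e < s + 1 ∨ (vmin e = s + 1 ∧ c2 e ∈ (∅ : Finset ℕ)) :=
                Or.inl (by omega)
              have hB2 : vmin e < s ∨ (vmin e = s ∧ c2 e ∈ B) := Or.inr ⟨h2, h3⟩
              rw [if_pos hA, if_pos hB2]
            · -- changed edge: c2 e survives deeper
              have hpc : pc c2 s B e = 2 * c2 e + 1 := by
                unfold pc
                rw [if_neg]
                rintro (h | ⟨-, h⟩)
                · omega
                · exact h3 h
              have hnotU : c2 e ∉ Uset c2 s := by
                intro hmem
                have : c2 e ∈ (Uset c2 s) \ B := Finset.mem_sdiff.mpr ⟨hmem, h3⟩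
                rw [hU] at this
                exact Finset.notMem_empty _ this
              have hmemE : c2 e ∈ edgeColors c2 := mem_edgeColors.mpr ⟨e, hd, rfl⟩
              rw [Uset, Finset.mem_filter] at hnotU
              push_neg at hnotU
              obtain ⟨e', hd', hlt', hce'⟩ := hnotU hmemE
              refine ⟨e', hd', ?_⟩
              rw [hpc]
              unfold pc
              rw [if_neg, hce']
              rintro (h | ⟨h, h'⟩)
              · omega
              · exact absurd h' (Finset.notMem_empty _)
          · refine ⟨e, hd, ?_⟩
            unfold pc
            have hgt : s < vmin e := by omega
            rw [if_neg, if_neg]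
            · rintro (h | ⟨h, -⟩) <;> omega
            · rintro (h | ⟨h, h'⟩)
              · omega
              · exact absurd h' (Finset.notMem_empty _)
      have hb1 := card_le_of_forall (pc c2 s B) (pc c2 (s+1) ∅) (2 * s) rel1
      have hb2 := card_le_of_exists (pc c2 s B) (pc c2 (s+1) ∅) rel2
      exact ih (s+1) ∅ hP' hμ' k (by omega) (by omega)


/-- If `G` is not a star and `H` has minimum degree at least 2, then
`S(n;G,H)` is an interval of integers. -/
theorem stmt_4 [Fintype β] (G : SimpleGraph α) (H : SimpleGraph β) [DecidableRel H.Adj]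
    (hG : ¬ IsStar G) (hH : ∀ v : β, 2 ≤ H.degree v) (n k k1 k2 : ℕ)
    (h1 : k1 ∈ mixedSpectrum n G H) (h2 : k2 ∈ mixedSpectrum n G H)
    (hk1 : k1 ≤ k) (hk2 : k ≤ k2) :
    k ∈ mixedSpectrum n G H := by
  obtain ⟨c1, hc1good, hc1card⟩ := h1
  obtain ⟨c2, hc2good, hc2card⟩ := h2
  have hN1 : (edgeColors (pc c1 0 ∅)).card = k1 := by rw [pc_zero, card_shift, hc1card]
  have hN2 : (edgeColors (pc c2 0 ∅)).card = k2 := by rw [pc_zero, card_shift, hc2card]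
  have hP1 : ∀ e : Sym2 (Fin n), ¬ e.IsDiag → 0 < vmin e → c1 e ∉ (∅ : Finset ℕ) :=
    fun e _ _ h => absurd h (Finset.notMem_empty _)
  have hP2 : ∀ e : Sym2 (Fin n), ¬ e.IsDiag → 0 < vmin e → c2 e ∉ (∅ : Finset ℕ) :=
    fun e _ _ h => absurd h (Finset.notMem_empty _)
  by_cases hk : k ≤ n - 1
  · refine main_lemma G H hG hH c1 hc1good
      ((n + 1 - 0) * ((edgeColors c1).card + 1) + ((Uset c1 0) \ ∅).card) 0 ∅ hP1 le_rfl k ?_ ?_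
    · rw [hN1]; omega
    · rw [hN1]; omega
  · refine main_lemma G H hG hH c2 hc2good
      ((n + 1 - 0) * ((edgeColors c2).card + 1) + ((Uset c2 0) \ ∅).card) 0 ∅ hP2 le_rfl k ?_ ?_
    · rw [hN2]; omega
    · rw [hN2]; omega
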